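/- For a 2×2 real antisymmetric matrix U with det U ≠ 0, a 2×2 real symmetric positive definite matrix Q, and diagonal weight W = diag(1, ω) with ω > 0: the equation T[W] = R, i.e. 2√(ω det U)/(Q₂₂ + ω Q₁₁) = √(det U / det Q), has a solution ω > 0 if and only if Q₁₂ = 0. -/

import Mathlib

open Matrix

/-- For 2×2 antisymmetric U (det U = u² ≠ 0) and positive definite Q, the equation
T[diag(1,ω)] = R has a solution ω > 0 if and only if Q₁₂ = 0. -/
theorem Tmeas_eq_Rmeas_diag_weight_iff (Q : Matrix (Fin 2) (Fin 2) ℝ) (hQ : Q.PosDef)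
    (u : ℝ) (hu : u ≠ 0) :
    (∃ ω : ℝ, 0 < ω ∧
        2 * Real.sqrt (ω * u ^ 2) / (Q 1 1 + ω * Q 0 0) =
          Real.sqrt (u ^ 2 / Q.det)) ↔ Q 0 1 = 0 := by
  have hsym : Q 1 0 = Q 0 1 := by
    have h := hQ.1
    have := congrFun (congrFun h 0) 1
    simpa [Matrix.conjTranspose_apply] using this
  have h00 : 0 < Q 0 0 := by
    have hne : (Pi.single 0 1 : Fin 2 → ℝ) ≠ 0 := by
      intro h; simpa using congrFun h 0
    have := hQ.dotProduct_mulVec_pos hne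
    simpa [Matrix.mulVec, dotProduct, Fin.sum_univ_two, Pi.single_apply] using this
  have h11 : 0 < Q 1 1 := by
    have hne : (Pi.single 1 1 : Fin 2 → ℝ) ≠ 0 := by
      intro h; simpa using congrFun h 1
    have := hQ.dotProduct_mulVec_pos hne
    simpa [Matrix.mulVec, dotProduct, Fin.sum_univ_two, Pi.single_apply] using this
  have hdetpos : 0 < Q.det := hQ.det_pos
  have hdet : Q.det = Q 0 0 * Q 1 1 - Q 0 1 ^ 2 := by
    rw [Matrix.det_fin_two, hsym]; ring
  have hu2 : 0 < u ^ 2 := by positivity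
  constructor
  · rintro ⟨ω, hω, heq⟩
    have hD : 0 < Q 1 1 + ω * Q 0 0 := by positivity
    set a := Real.sqrt ω with ha
    set b := Real.sqrt Q.det with hb
    have ha2 : a ^ 2 = ω := Real.sq_sqrt hω.le
    have hb2 : b ^ 2 = Q.det := Real.sq_sqrt hdetpos.le
    have hapos : 0 < a := Real.sqrt_pos.mpr hω
    have hbpos : 0 < b := Real.sqrt_pos.mpr hdetpos
    have hL : Real.sqrt (ω * u ^ 2) = a * |u| := by
      rw [Real.sqrt_mul hω.le, Real.sqrt_sq_eq_abs]
    have hR : Real.sqrt (u ^ 2 / Q.det) = |u| / b := by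
      rw [Real.sqrt_div (sq_nonneg u), Real.sqrt_sq_eq_abs]
    rw [hL, hR] at heq
    have habs : 0 < |u| := abs_pos.mpr hu
    have key : 2 * a * b = Q 1 1 + ω * Q 0 0 := by
      field_simp at heq
      nlinarith [heq]
    have h4 : 4 * ω * Q.det = (Q 1 1 + ω * Q 0 0) ^ 2 := by
      nlinarith [key, ha2, hb2]
    have hw : ω * Q 0 1 ^ 2 ≤ 0 := by nlinarith [sq_nonneg (Q 1 1 - ω * Q 0 0), hdet]
    have h2 : Q 0 1 ^ 2 ≤ 0 := by nlinarith [sq_nonneg (Q 0 1)]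
    have := le_antisymm h2 (sq_nonneg _)
    exact pow_eq_zero_iff (by norm_num) |>.mp this
  · intro h01
    refine ⟨Q 1 1 / Q 0 0, by positivity, ?_⟩
    have hdet' : Q.det = Q 0 0 * Q 1 1 := by rw [hdet, h01]; ring
    rw [hdet']
    rw [Real.sqrt_mul (by positivity), Real.sqrt_div (sq_nonneg u), Real.sqrt_sq_eq_abs,
      Real.sqrt_div (by positivity : (0:ℝ) ≤ Q 1 1), Real.sqrt_mul (by positivity : (0:ℝ) ≤ Q 0 0)]
    have s0 : (0:ℝ) < Real.sqrt (Q 0 0) := Real.sqrt_pos.mpr h00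
    have s1 : (0:ℝ) < Real.sqrt (Q 1 1) := Real.sqrt_pos.mpr h11
    have hs1 : Real.sqrt (Q 1 1) ^ 2 = Q 1 1 := Real.sq_sqrt h11.le
    have hs0 : Real.sqrt (Q 0 0) ^ 2 = Q 0 0 := Real.sq_sqrt h00.le
    have hden : Q 1 1 + Q 1 1 / Q 0 0 * Q 0 0 = 2 * Q 1 1 := by
      rw [div_mul_cancel₀ _ (ne_of_gt h00)]; ring
    rw [hden, div_eq_div_iff (by positivity) (by positivity)]
    have hc : Real.sqrt (Q 1 1) / Real.sqrt (Q 0 0) * Real.sqrt (Q 0 0) = Real.sqrt (Q 1 1) :=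
      div_mul_cancel₀ _ (ne_of_gt s0)
    linear_combination 2 * |u| * Real.sqrt (Q 1 1) * hc + 2 * |u| * hs1
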